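/- Let (I,ρ) be a finite or countable probability space with ρ(i) > 0 for all i, let d ∈ ℕ, and let a₁, a₂ : I → 𝒜_d be two functions into the permutation group of Y_d = {1,…,d}. Define A_k : X_ρ → 𝒜_d by A_k(x) = a_k(x₁)⁻¹ for x = (x_n)_{n≥1} ∈ X_ρ. If a measurable function W : X_ρ → 𝒜_d satisfies A₂(x)·W(x) = W(T_ρ x)·A₁(x) for m_ρ-a.e. x, then W is a.e. constant: there exists w₀ ∈ 𝒜_d with W(x) = w₀ for a.e. x. Consequently, A₁ and A₂ are cohomologous with respect to T_ρ (i.e. such a W exists) if and only if a₁ and a₂ are conjugate in 𝒜_d, i.e. there exists w₀ ∈ 𝒜_d with a₂(i)·w₀ = w₀·a₁(i) for all i ∈ I. -/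

import Mathlib

open MeasureTheory
open scoped ENNReal Classical

namespace OneSidedMarkov

noncomputable section

/-- The canonical σ-algebra on a sequence space over a (countable) alphabet:
the product of the discrete σ-algebras on the coordinates. -/
instance seqMS (E : Type*) : MeasurableSpace (ℕ → E) :=
  @MeasurableSpace.pi ℕ (fun _ => E) fun _ => ⊤

/-- Measurability of a map into a (countable) set carrying the discrete σ-algebra. -/
def DMeasurable {X : Type*} [MeasurableSpace X] {A : Type*} (f : X → A) : Prop :=
  ∀ a : A, MeasurableSet (f ⁻¹' {a})

/-- The cylinder set determined by a finite word. -/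
def cyl {E : Type*} {n : ℕ} (g : Fin n → E) : Set (ℕ → E) :=
  {x | ∀ k : Fin n, x (k : ℕ) = g k}

/-- The one-sided shift on a sequence space. -/
def shift {E : Type*} (x : ℕ → E) : ℕ → E := fun n => x (n + 1)

/-- `ρ` is a strictly positive probability vector. -/
def IsProbVector {I : Type*} (ρ : I → ℝ≥0∞) : Prop :=
  (∀ i, 0 < ρ i) ∧ ∑' i, ρ i = 1

/-- `μ` is the Bernoulli (product) measure with marginal `ρ`. -/
def IsProductMeasure {I : Type*} (ρ : I → ℝ≥0∞) (μ : Measure (ℕ → I)) : Prop :=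
  IsProbabilityMeasure μ ∧ ∀ (n : ℕ) (w : Fin n → I), μ (cyl w) = ∏ k, ρ (w k)

/-- Isomorphism mod 0 of two measure-preserving systems: a measure-preserving map,
invertible after discarding null sets, intertwining the transformations a.e. -/
def IsomorphicMod0 {X Y : Type*} [MeasurableSpace X] [MeasurableSpace Y]
    (μ : Measure X) (T : X → X) (ν : Measure Y) (S : Y → Y) : Prop :=
  ∃ Φ : X → Y, MeasurePreserving Φ μ ν ∧ (∀ᵐ x ∂μ, Φ (T x) = S (Φ x)) ∧
    ∃ Ψ : Y → X, MeasurePreserving Ψ ν μ ∧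
      (∀ᵐ x ∂μ, Ψ (Φ x) = x) ∧ ∀ᵐ y ∂ν, Φ (Ψ y) = y

/-! ### Stochastic graphs -/

/-- The data of a weighted directed graph: edge set `E`, vertex set `V`,
source and target maps, and weights on edges. -/
structure PreGraph (E V : Type*) where
  s : E → V
  t : E → V
  p : E → ℝ≥0∞

variable {E V F W : Type*}

namespace PreGraph

/-- A weighted directed graph is stochastic if weights are positive, the weights of the
edges starting at any given vertex sum to `1`, and every vertex has an outgoing and
an incoming edge. -/
def IsStochastic (G : PreGraph E V) : Prop :=
  (∀ g, 0 < G.p g) ∧ (∀ u : V, ∑' g : {g : E // G.s g = u}, G.p g.1 = 1) ∧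
    (∀ u : V, ∃ g, G.s g = u) ∧ ∀ v : V, ∃ g, G.t g = v

/-- `p0` is a stationary probability on the vertices of `G`. -/
def IsStationary (G : PreGraph E V) (p0 : V → ℝ≥0∞) : Prop :=
  (∀ u, 0 < p0 u) ∧ ∑' u, p0 u = 1 ∧
    ∀ v : V, ∑' g : {g : E // G.t g = v}, G.p g.1 * p0 (G.s g.1) = p0 v

/-- `G` is positively recurrent iff a stationary probability exists. -/
def PositivelyRecurrent (G : PreGraph E V) : Prop := ∃ p0, G.IsStationary p0

/-- One-step reachability along a directed edge. -/
def Step (G : PreGraph E V) (u v : V) : Prop := ∃ g, G.s g = u ∧ G.t g = v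

/-- `G` is irreducible: any ordered pair of vertices is joined by a finite directed path. -/
protected def Irreducible (G : PreGraph E V) : Prop :=
  ∀ u v : V, Relation.ReflTransGen G.Step u v

/-- The (backward) path condition for finite words of edges:
`s (g k) = t (g (k+1))` for consecutive indices. -/
def IsPathW (G : PreGraph E V) {n : ℕ} (g : Fin n → E) : Prop :=
  ∀ (k : ℕ) (h : k + 1 < n), G.s (g ⟨k, Nat.lt_of_succ_lt h⟩) = G.t (g ⟨k + 1, h⟩)

/-- The set of admissible one-sided infinite (backward) paths. -/
def PathSet (G : PreGraph E V) : Set (ℕ → E) := {x | ∀ n, G.s (x n) = G.t (x (n + 1))}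

/-- `m` is the stationary Markov measure of `(G, p0)`, characterized by its values on
cylinder sets: the cylinder over a backward path `g₁ … gₙ` has mass
`p g₁ ⋯ p gₙ · p0 (s gₙ)`, and cylinders over non-paths are null. -/
def IsMarkovMeasure (G : PreGraph E V) (p0 : V → ℝ≥0∞) (m : Measure (ℕ → E)) : Prop :=
  IsProbabilityMeasure m ∧
    ∀ (n : ℕ) (g : Fin (n + 1) → E),
      m (cyl g) =
        if G.IsPathW g then (∏ k, G.p (g k)) * p0 (G.s (g (Fin.last n))) else 0

end PreGraph

/-- A (weight-preserving, deterministic) homomorphism of weighted directed graphs. -/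
structure GraphHom (G : PreGraph E V) (H : PreGraph F W) where
  toFun : E → F
  vFun : V → W
  map_s : ∀ g, H.s (toFun g) = vFun (G.s g)
  map_t : ∀ g, H.t (toFun g) = vFun (G.t g)
  map_p : ∀ g, H.p (toFun g) = G.p g
  v_surj : Function.Surjective vFun
  deterministic : ∀ (u : V) (h : F), H.s h = vFun u → ∃! g : E, G.s g = u ∧ toFun g = h

namespace GraphHom

variable {G : PreGraph E V} {H : PreGraph F W}

/-- The factor map induced on path spaces by a graph homomorphism. -/
def pathMap (φ : GraphHom G H) (x : ℕ → E) : ℕ → F := fun n => φ.toFun (x n)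

/-- `φ` has degree `d` (with respect to the Markov measure `m` on the source):
almost every fiber of the induced factor map, within the path space, has exactly
`d` elements. -/
def HasDegree (φ : GraphHom G H) (m : Measure (ℕ → E)) (d : ℕ) : Prop :=
  ∀ᵐ x ∂m, (G.PathSet ∩ φ.pathMap ⁻¹' {φ.pathMap x}).Finite ∧
    (G.PathSet ∩ φ.pathMap ⁻¹' {φ.pathMap x}).ncard = d

/-- A homomorphism is an isomorphism of graphs if it is bijective on edges and
on vertices. -/
def IsIso (φ : GraphHom G H) : Prop :=
  Function.Bijective φ.toFun ∧ Function.Bijective φ.vFun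

end GraphHom

/-- The standard Bernoulli graph: a single vertex, edge set `I` with weights `ρ`. -/
def bernoulliGraph {I : Type*} (ρ : I → ℝ≥0∞) : PreGraph I Unit :=
  ⟨fun _ => (), fun _ => (), ρ⟩

/-- The graph skew product `H̄ₐ` of `H` by a function `a` into the permutations of
`Fin d`. -/
def gsp (H : PreGraph F W) {d : ℕ} (a : F → Equiv.Perm (Fin d)) :
    PreGraph (F × Fin d) (W × Fin d) where
  s := fun hy => (H.s hy.1, hy.2)
  t := fun hy => (H.t hy.1, a hy.1 hy.2)
  p := fun hy => H.p hy.1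

/-- Two functions `a₁ a₂ : H → 𝒜_d` are cohomologous with respect to `H`. -/
def Cohomologous (H : PreGraph F W) {d : ℕ} (a₁ a₂ : F → Equiv.Perm (Fin d)) : Prop :=
  ∃ w : W → Equiv.Perm (Fin d), ∀ h, a₂ h * w (H.s h) = w (H.t h) * a₁ h

/-- The map `fᵢ : G⁰ → G⁰` induced by a homomorphism onto the Bernoulli graph:
`fᵢ u` is the target of the unique edge starting at `u` sent to `i`. -/
def GraphHom.fmap {I : Type*} {G : PreGraph E V} {ρ : I → ℝ≥0∞}
    (φ : GraphHom G (bernoulliGraph ρ)) (i : I) (u : V) : V :=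
  G.t (φ.deterministic u i (Subsingleton.elim _ _)).exists.choose

/-- Composite of the maps determined by a finite word. -/
def compWord {U I : Type*} (f : I → U → U) {n : ℕ} (w : Fin n → I) : U → U :=
  (List.ofFn fun k => f (w k)).foldr (· ∘ ·) id

/-- The semigroup (set of all nonempty finite composites) generated by a family of
self-maps. -/
def genSem {U I : Type*} (f : I → U → U) : Set (U → U) :=
  {g | ∃ (n : ℕ) (w : Fin (n + 1) → I), g = compWord f w}

/-- `L` is a persistent `d`-set for the semigroup `S` of self-maps of `U`. -/
def PersistentSet {U : Type*} (S : Set (U → U)) (d : ℕ) (L : Set U) : Prop :=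
  L.Finite ∧ L.ncard = d ∧ (∀ f ∈ S, (f '' L).ncard = d) ∧
    ∀ A : Set U, A.Finite → ∃ f ∈ S, f '' A ⊆ L

/-- The semigroup `S` is `d`-contractive. -/
def IsDContractive {U : Type*} (S : Set (U → U)) (d : ℕ) : Prop :=
  ∃ L, PersistentSet S d L

/-- The itinerary (canonical factor) map of an endomorphism `T` relative to `δ`. -/
def itin {X I : Type*} (T : X → X) (δ : X → I) (x : X) : ℕ → I := fun n => δ (T^[n] x)

/-- `δ ∈ Δ_ρ(T)`: `δ` has law `ρ`, the σ-algebra generated by `δ` is independent of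
`T⁻¹𝓑`, and together they generate the whole σ-algebra modulo null sets. -/
def IsUniformGenerator {X : Type*} [mX : MeasurableSpace X] {I : Type*} (ρ : I → ℝ≥0∞)
    (m : Measure X) (T : X → X) (δ : X → I) : Prop :=
  DMeasurable δ ∧ (∀ i, m (δ ⁻¹' {i}) = ρ i) ∧
    ProbabilityTheory.Indep (MeasurableSpace.comap δ ⊤) (mX.comap T) m ∧
    ∀ A : Set X, MeasurableSet A →
      ∃ B : Set X, MeasurableSet[MeasurableSpace.comap δ ⊤ ⊔ mX.comap T] B ∧
        m (symmDiff A B) = 0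

/-- The fibers of `Φ` have cardinality `d ∈ ℕ∞` almost everywhere. -/
def HasFiberCard {X : Type*} [MeasurableSpace X] {I : Type*} (m : Measure X)
    (Φ : X → ℕ → I) (d : ℕ∞) : Prop :=
  ∀ᵐ x ∂m, (Φ ⁻¹' {Φ x}).encard = d

/-- `d` is the minimal index `d(T)` of the `ρ`-uniform endomorphism `T`. -/
def HasMinimalIndex {X : Type*} [MeasurableSpace X] {I : Type*} (ρ : I → ℝ≥0∞)
    (m : Measure X) (T : X → X) (d : ℕ∞) : Prop :=
  (∃ δ : X → I, IsUniformGenerator ρ m T δ ∧ HasFiberCard m (itin T δ) d) ∧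
    ∀ (δ : X → I) (d' : ℕ∞),
      IsUniformGenerator ρ m T δ → HasFiberCard m (itin T δ) d' → d ≤ d'

/-- The uniform probability measure on `Fin d`. -/
def unif (d : ℕ) : Measure (Fin d) := (d : ℝ≥0∞)⁻¹ • Measure.count

/-- The `n`-stringing graph `G⁽ⁿ⁾`: edges are the backward paths of length `n+1`,
vertices the backward paths of length `n`. -/
def stringing (G : PreGraph E V) (n : ℕ) :
    PreGraph {g : Fin (n + 1) → E // G.IsPathW g} {g : Fin n → E // G.IsPathW g} where
  s := fun g => ⟨fun k => g.1 k.succ, fun k h => g.2 (k + 1) (Nat.succ_lt_succ h)⟩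
  t := fun g => ⟨fun k => g.1 k.castSucc, fun k h => g.2 k (Nat.lt_succ_of_lt h)⟩
  p := fun g => ∏ k, G.p (g.1 k)

/-- A `(π,ψ)`-extension in `Ext^d(I,ρ)`: a graph skew product `d`-extension
`H̄ₐ → H` of a positively recurrent graph `H` admitting a degree-one homomorphism
`ψ : H → I` onto the Bernoulli graph, with `H̄ₐ` irreducible. -/
structure PiPsiExt (I : Type) (ρ : I → ℝ≥0∞) (d : ℕ) where
  F : Type
  W : Type
  countF : Countable F
  countW : Countable W
  H : PreGraph F W
  stoch : H.IsStochastic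
  a : F → Equiv.Perm (Fin d)
  ψ : GraphHom H (bernoulliGraph ρ)
  p0 : W → ℝ≥0∞
  stat : H.IsStationary p0
  m : Measure (ℕ → F)
  markov : H.IsMarkovMeasure p0 m
  deg1 : ψ.HasDegree m 1
  irr : (gsp H a).Irreducible

/-- The partial order on `Ext^d(I,ρ)`: `P₁ ≼ P` via homomorphisms `κ, κ̄` making the
diagram commute, with `a₁ ∘ κ` cohomologous to `a`. -/
def ExtLE {I : Type} {ρ : I → ℝ≥0∞} {d : ℕ} (P₁ P : PiPsiExt I ρ d) : Prop :=
  ∃ (κ : GraphHom P.H P₁.H) (κb : GraphHom (gsp P.H P.a) (gsp P₁.H P₁.a)),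
    (∀ g : P.F × Fin d, (κb.toFun g).1 = κ.toFun g.1) ∧
    (∀ g : P.F, P.ψ.toFun g = P₁.ψ.toFun (κ.toFun g)) ∧
    Cohomologous P.H P.a (fun h => P₁.a (κ.toFun h))

/-- Equivalence of `(π,ψ)`-extensions: as `ExtLE` but with `κ, κ̄` isomorphisms. -/
def ExtEquiv {I : Type} {ρ : I → ℝ≥0∞} {d : ℕ} (P₁ P : PiPsiExt I ρ d) : Prop :=
  ∃ (κ : GraphHom P.H P₁.H) (κb : GraphHom (gsp P.H P.a) (gsp P₁.H P₁.a)),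
    κ.IsIso ∧ κb.IsIso ∧
    (∀ g : P.F × Fin d, (κb.toFun g).1 = κ.toFun g.1) ∧
    (∀ g : P.F, P.ψ.toFun g = P₁.ψ.toFun (κ.toFun g)) ∧
    Cohomologous P.H P.a (fun h => P₁.a (κ.toFun h))

/-- An irreducible element of `(Ext^d(I,ρ), ≼)`. -/
def ExtIrreducible {I : Type} {ρ : I → ℝ≥0∞} {d : ℕ} (P : PiPsiExt I ρ d) : Prop :=
  ∀ P₁ : PiPsiExt I ρ d, ExtLE P₁ P → ExtEquiv P₁ P

end

end OneSidedMarkov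

namespace OneSidedMarkov

open MeasureTheory
open scoped ENNReal

set_option linter.unusedSectionVars false

section Aux

variable {I : Type} [Countable I]

/-- prefix sets -/
def pfx (n : ℕ) (S : Set (Fin n → I)) : Set (ℕ → I) := {x | (fun k : Fin n => x (k : ℕ)) ∈ S}

lemma eval_measurable (m : ℕ) (s : Set I) : MeasurableSet {x : ℕ → I | x m ∈ s} :=
  @measurable_pi_apply ℕ (fun _ => I) (fun _ => ⊤) m s trivial

lemma shift_measurable : Measurable (shift : (ℕ → I) → (ℕ → I)) := by
  letI : MeasurableSpace I := ⊤
  apply measurable_pi_lambda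
  intro n
  exact measurable_pi_apply (n + 1)

lemma cyl_measurable {n : ℕ} (u : Fin n → I) : MeasurableSet (cyl u) := by
  have : cyl u = ⋂ k : Fin n, {x : ℕ → I | x (k : ℕ) ∈ ({u k} : Set I)} := by
    ext x; simp [cyl]
  rw [this]
  exact MeasurableSet.iInter fun k => eval_measurable _ _

lemma pfx_eq_iUnion (n : ℕ) (S : Set (Fin n → I)) : pfx n S = ⋃ u ∈ S, cyl u := by
  ext x
  simp only [pfx, Set.mem_setOf_eq, Set.mem_iUnion, cyl]
  constructor
  · intro h; exact ⟨fun k => x (k : ℕ), h, fun k => rfl⟩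
  · rintro ⟨u, hu, h⟩
    have : (fun k : Fin n => x (k : ℕ)) = u := funext fun k => h k
    rwa [this]

lemma pfx_measurable (n : ℕ) (S : Set (Fin n → I)) : MeasurableSet (pfx n S) := by
  rw [pfx_eq_iUnion]
  exact MeasurableSet.biUnion S.to_countable fun u _ => cyl_measurable u

lemma cyl_disjoint {n : ℕ} {u v : Fin n → I} (h : u ≠ v) : Disjoint (cyl u) (cyl v) := by
  rw [Set.disjoint_left]
  intro x hx hx'
  exact h (funext fun k => (hx k).symm.trans (hx' k))

def cylSet (I : Type) : Set (Set (ℕ → I)) := {s | ∃ (n : ℕ) (u : Fin n → I), s = cyl u}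

lemma isPiSystem_cylSet : IsPiSystem (cylSet I) := by
  rintro s ⟨n, u, rfl⟩ t ⟨m, v, rfl⟩ hne
  obtain ⟨x, hxu, hxv⟩ := hne
  rcases le_total n m with h | h
  · refine ⟨m, v, ?_⟩
    apply Set.Subset.antisymm Set.inter_subset_right
    intro y hy
    refine ⟨fun k => ?_, hy⟩
    have h1 : y (k : ℕ) = v ⟨(k : ℕ), lt_of_lt_of_le k.2 h⟩ := hy ⟨(k : ℕ), lt_of_lt_of_le k.2 h⟩
    have h2 : x (k : ℕ) = v ⟨(k : ℕ), lt_of_lt_of_le k.2 h⟩ := hxv ⟨(k : ℕ), lt_of_lt_of_le k.2 h⟩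
    rw [h1, ← h2, hxu k]
  · refine ⟨n, u, ?_⟩
    apply Set.Subset.antisymm Set.inter_subset_left
    intro y hy
    refine ⟨hy, fun k => ?_⟩
    have h1 : y (k : ℕ) = u ⟨(k : ℕ), lt_of_lt_of_le k.2 h⟩ := hy ⟨(k : ℕ), lt_of_lt_of_le k.2 h⟩
    have h2 : x (k : ℕ) = u ⟨(k : ℕ), lt_of_lt_of_le k.2 h⟩ := hxu ⟨(k : ℕ), lt_of_lt_of_le k.2 h⟩
    rw [h1, ← h2, hxv k]

lemma seqMS_eq_generateFrom : (seqMS I) = MeasurableSpace.generateFrom (cylSet I) := by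
  apply le_antisymm
  · show (⨆ m : ℕ, MeasurableSpace.comap (fun x : ℕ → I => x m) (⊤ : MeasurableSpace I)) ≤ _
    refine iSup_le fun m => ?_
    rintro s ⟨t, -, rfl⟩
    have : (fun x : ℕ → I => x m) ⁻¹' t
        = pfx (m + 1) {u : Fin (m + 1) → I | u ⟨m, Nat.lt_succ_self m⟩ ∈ t} := by
      ext x; simp [pfx]
    rw [this, pfx_eq_iUnion]
    exact MeasurableSet.biUnion (Set.to_countable _)
      fun u _ => MeasurableSpace.measurableSet_generateFrom ⟨m + 1, u, rfl⟩
  · exact MeasurableSpace.generateFrom_le (by rintro s ⟨n, u, rfl⟩; exact cyl_measurable u)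


section MeasureAux

variable {ρ : I → ℝ≥0∞} {μ : Measure (ℕ → I)}

lemma shift_iter_apply : ∀ (n : ℕ) (x : ℕ → I) (k : ℕ), shift^[n] x k = x (k + n) := by
  intro n
  induction n with
  | zero => intro x k; simp
  | succ n ih =>
    intro x k
    rw [Function.iterate_succ_apply]
    rw [ih (shift x) k]
    show x (k + n + 1) = _
    ring_nf

lemma cyl_inter_shift {n m : ℕ} (u : Fin n → I) (w : Fin m → I) :
    cyl u ∩ (shift^[n]) ⁻¹' (cyl w) = cyl (Fin.append u w) := by
  ext x
  constructor
  · rintro ⟨hu, hw⟩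
    intro k
    refine Fin.addCases (fun j => ?_) (fun j => ?_) k
    · rw [Fin.append_left]
      have : ((Fin.castAdd m j : Fin (n + m)) : ℕ) = (j : ℕ) := rfl
      rw [this]; exact hu j
    · rw [Fin.append_right]
      have h1 : ((Fin.natAdd n j : Fin (n + m)) : ℕ) = n + (j : ℕ) := rfl
      rw [h1, Nat.add_comm n (j : ℕ), ← shift_iter_apply n x (j : ℕ)]
      exact hw j
  · intro h
    constructor
    · intro k
      have := h (Fin.castAdd m k)
      rwa [Fin.append_left] at this
    · intro k
      have := h (Fin.natAdd n k)
      rw [Fin.append_right] at this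
      show shift^[n] x (k : ℕ) = w k
      rw [shift_iter_apply n x k]
      have h1 : ((Fin.natAdd n k : Fin (n + m)) : ℕ) = n + (k : ℕ) := rfl
      rw [h1] at this
      rwa [Nat.add_comm]

lemma pfx_compl (n : ℕ) (S : Set (Fin n → I)) : pfx n Sᶜ = (pfx n S)ᶜ := rfl

lemma pfx_union (n : ℕ) (S T : Set (Fin n → I)) : pfx n (S ∪ T) = pfx n S ∪ pfx n T := rfl

lemma pfx_castLE {n n' : ℕ} (h : n ≤ n') (S : Set (Fin n → I)) :
    pfx n S = pfx n' {u : Fin n' → I | (fun k : Fin n => u (Fin.castLE h k)) ∈ S} := by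
  ext x
  simp only [pfx, Set.mem_setOf_eq]
  have : (fun k : Fin n => x ((Fin.castLE h k : Fin n') : ℕ)) = fun k : Fin n => x (k : ℕ) := by
    funext k; rfl
  rw [this]

lemma symmDiff_union_subset (A₁ A₂ B₁ B₂ : Set (ℕ → I)) :
    symmDiff (A₁ ∪ A₂) (B₁ ∪ B₂) ⊆ symmDiff A₁ B₁ ∪ symmDiff A₂ B₂ := by
  intro x hx
  simp only [Set.symmDiff_def, Set.mem_union, Set.mem_diff, Set.mem_union] at hx ⊢
  tauto

variable (hμ : IsProductMeasure ρ μ)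
include hμ

lemma measure_cyl_inter_shift {n m : ℕ} (u : Fin n → I) (w : Fin m → I) :
    μ (cyl u ∩ (shift^[n]) ⁻¹' (cyl w)) = μ (cyl u) * μ (cyl w) := by
  rw [cyl_inter_shift, hμ.2, hμ.2, hμ.2, Fin.prod_univ_add]
  congr 1
  · exact Finset.prod_congr rfl fun j _ => by rw [Fin.append_left]
  · exact Finset.prod_congr rfl fun j _ => by rw [Fin.append_right]

lemma indep_cyl_shift {n : ℕ} (u : Fin n → I) {D : Set (ℕ → I)} (hD : MeasurableSet D) :
    μ (cyl u ∩ (shift^[n]) ⁻¹' D) = μ (cyl u) * μ D := by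
  haveI : IsProbabilityMeasure μ := hμ.1
  have hit : Measurable (shift^[n] : (ℕ → I) → (ℕ → I)) := shift_measurable.iterate n
  set κ₁ : Measure (ℕ → I) := Measure.map (shift^[n]) (μ.restrict (cyl u)) with hκ₁
  set κ₂ : Measure (ℕ → I) := μ (cyl u) • μ with hκ₂
  have happ : ∀ D : Set (ℕ → I), MeasurableSet D → κ₁ D = μ (cyl u ∩ (shift^[n]) ⁻¹' D) := by
    intro D hD
    rw [hκ₁, Measure.map_apply hit hD, Measure.restrict_apply (hit hD), Set.inter_comm]
  haveI : IsFiniteMeasure κ₁ := by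
    constructor
    rw [happ _ MeasurableSet.univ]
    exact lt_of_le_of_lt (measure_mono (Set.subset_univ _)) (measure_lt_top μ _)
  have hext : κ₁ = κ₂ := by
    refine ext_of_generate_finite (cylSet I) seqMS_eq_generateFrom isPiSystem_cylSet ?_ ?_
    · rintro s ⟨m, w, rfl⟩
      rw [happ _ (cyl_measurable w), measure_cyl_inter_shift hμ]
      simp [hκ₂]
    · rw [happ _ MeasurableSet.univ]
      simp only [Set.preimage_univ, Set.inter_univ, hκ₂, Measure.smul_apply, smul_eq_mul]
      rw [measure_univ, mul_one]
  have := happ D hD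
  rw [hext] at this
  simpa [hκ₂] using this.symm

lemma measure_pfx (n : ℕ) (S : Set (Fin n → I)) :
    μ (pfx n S) = ∑' u : S, μ (cyl u.1) := by
  rw [pfx_eq_iUnion]
  exact measure_biUnion S.to_countable
    (fun u _ v _ huv => cyl_disjoint huv) (fun u _ => cyl_measurable u)

lemma shift_iter_preserving (n : ℕ) {D : Set (ℕ → I)} (hD : MeasurableSet D) :
    μ ((shift^[n]) ⁻¹' D) = μ D := by
  haveI : IsProbabilityMeasure μ := hμ.1
  have hit : Measurable (shift^[n] : (ℕ → I) → (ℕ → I)) := shift_measurable.iterate n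
  have huniv : (⋃ u : Fin n → I, cyl u) = Set.univ := by
    ext x
    simp only [Set.mem_iUnion, Set.mem_univ, iff_true]
    exact ⟨fun k => x (k : ℕ), fun k => rfl⟩
  have h1 : (shift^[n]) ⁻¹' D = ⋃ u : Fin n → I, (cyl u ∩ (shift^[n]) ⁻¹' D) := by
    rw [← Set.iUnion_inter, huniv, Set.univ_inter]
  rw [h1, measure_iUnion
      (fun u v huv => (cyl_disjoint huv).mono Set.inter_subset_left Set.inter_subset_left)
      (fun u => (cyl_measurable u).inter (hit hD))]
  have h2 : ∀ u : Fin n → I, μ (cyl u ∩ (shift^[n]) ⁻¹' D) = μ (cyl u) * μ D :=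
    fun u => indep_cyl_shift hμ u hD
  rw [tsum_congr h2, ENNReal.tsum_mul_right]
  have h3 : ∑' u : Fin n → I, μ (cyl u) = 1 := by
    rw [← measure_iUnion (fun u v huv => cyl_disjoint huv) (fun u => cyl_measurable u), huniv,
      measure_univ]
  rw [h3, one_mul]

lemma ae_shift_iter {p : (ℕ → I) → Prop} (h : ∀ᵐ x ∂μ, p x) (n : ℕ) :
    ∀ᵐ x ∂μ, p (shift^[n] x) := by
  rw [ae_iff] at h ⊢
  obtain ⟨N, hsub, hN, hN0⟩ := exists_measurable_superset_of_null h
  have hsub2 : {a | ¬ p (shift^[n] a)} ⊆ (shift^[n]) ⁻¹' N := fun x hx => hsub hx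
  refine measure_mono_null hsub2 ?_
  rw [shift_iter_preserving hμ n hN]
  exact hN0


/-- Approximation of measurable sets by finite-level prefix sets. -/
theorem approx_pfx (A : Set (ℕ → I)) (hA : MeasurableSet A) :
    ∀ ε : ℝ≥0∞, 0 < ε → ∃ (n : ℕ) (S : Set (Fin n → I)), μ (symmDiff A (pfx n S)) ≤ ε := by
  haveI : IsProbabilityMeasure μ := hμ.1
  set Good : Set (ℕ → I) → Prop := fun A =>
    ∀ ε : ℝ≥0∞, 0 < ε → ∃ (n : ℕ) (S : Set (Fin n → I)), μ (symmDiff A (pfx n S)) ≤ ε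
    with hGood
  have good_union : ∀ A₁ A₂, Good A₁ → Good A₂ → Good (A₁ ∪ A₂) := by
    intro A₁ A₂ h1 h2 ε hε
    have hε2 : 0 < ε / 2 := ENNReal.half_pos hε.ne'
    obtain ⟨n₁, S₁, hS₁⟩ := h1 (ε / 2) hε2
    obtain ⟨n₂, S₂, hS₂⟩ := h2 (ε / 2) hε2
    set n := max n₁ n₂
    rw [pfx_castLE (le_max_left n₁ n₂) S₁] at hS₁
    rw [pfx_castLE (le_max_right n₁ n₂) S₂] at hS₂
    set T₁ : Set (Fin n → I) :=
      {u | (fun k : Fin n₁ => u (Fin.castLE (le_max_left n₁ n₂) k)) ∈ S₁} with hT₁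
    set T₂ : Set (Fin n → I) :=
      {u | (fun k : Fin n₂ => u (Fin.castLE (le_max_right n₁ n₂) k)) ∈ S₂} with hT₂
    refine ⟨n, T₁ ∪ T₂, ?_⟩
    rw [pfx_union]
    calc μ (symmDiff (A₁ ∪ A₂) (pfx n T₁ ∪ pfx n T₂))
        ≤ μ (symmDiff A₁ (pfx n T₁) ∪ symmDiff A₂ (pfx n T₂)) :=
          measure_mono (symmDiff_union_subset _ _ _ _)
      _ ≤ μ (symmDiff A₁ (pfx n T₁)) + μ (symmDiff A₂ (pfx n T₂)) := measure_union_le _ _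
      _ ≤ ε / 2 + ε / 2 := add_le_add hS₁ hS₂
      _ = ε := ENNReal.add_halves ε
  have good_empty : Good ∅ := by
    intro ε hε
    refine ⟨0, ∅, ?_⟩
    have : pfx 0 (∅ : Set (Fin 0 → I)) = ∅ := rfl
    rw [this, symmDiff_self]
    simp
  set 𝒢 : MeasurableSpace (ℕ → I) :=
    { MeasurableSet' := fun A => MeasurableSet A ∧ Good A
      measurableSet_empty := ⟨MeasurableSet.empty, good_empty⟩
      measurableSet_compl := by
        rintro A ⟨hAm, hAg⟩
        refine ⟨hAm.compl, fun ε hε => ?_⟩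
        obtain ⟨n, S, hS⟩ := hAg ε hε
        exact ⟨n, Sᶜ, by rwa [pfx_compl, compl_symmDiff_compl]⟩
      measurableSet_iUnion := by
        intro f hf
        refine ⟨MeasurableSet.iUnion fun i => (hf i).1, fun ε hε => ?_⟩
        rcases eq_top_or_lt_top ε with rfl | hεtop
        · exact ⟨0, ∅, le_top⟩
        have hε2 : 0 < ε / 2 := ENNReal.half_pos hε.ne'
        -- tail sets
        set s : ℕ → Set (ℕ → I) := fun N => (⋃ i, f i) \ ⋃ k < N, f k with hs
        have hmeas : ∀ N, MeasurableSet (s N) := fun N =>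
          (MeasurableSet.iUnion fun i => (hf i).1).diff
            (MeasurableSet.biUnion (Set.to_countable _) fun k _ => (hf k).1)
        have hanti : Antitone s := fun N M hNM =>
          Set.diff_subset_diff_right (Set.biUnion_subset_biUnion_left fun k hk =>
            lt_of_lt_of_le hk hNM)
        have hinter : ⋂ N, s N = ∅ := by
          ext x
          simp only [Set.mem_iInter, Set.mem_empty_iff_false, iff_false]
          intro hx
          by_cases hmem : x ∈ ⋃ i, f i
          · obtain ⟨k, hk⟩ := Set.mem_iUnion.1 hmem
            exact (hx (k + 1)).2 (Set.mem_biUnion (Nat.lt_succ_self k) hk)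
          · exact hmem ((hx 0).1)
        have htend : Filter.Tendsto (fun N => μ (s N)) Filter.atTop (nhds 0) := by
          have := MeasureTheory.tendsto_measure_iInter_atTop
            (fun N => (hmeas N).nullMeasurableSet) hanti ⟨0, (measure_lt_top μ _).ne⟩
          rwa [hinter, measure_empty] at this
        obtain ⟨N, hN⟩ := (htend.eventually_lt_const hε2).exists
        -- approximate the finite union
        have good_fin : ∀ M : ℕ, Good (⋃ k < M, f k) := by
          intro M
          induction M with
          | zero => simpa using good_empty
          | succ M ih =>
            rw [Set.biUnion_lt_succ]
            exact good_union _ _ ih (hf M).2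
        obtain ⟨n, S, hS⟩ := good_fin N (ε / 2) hε2
        refine ⟨n, S, ?_⟩
        have hsub : symmDiff (⋃ i, f i) (pfx n S) ⊆ s N ∪ symmDiff (⋃ k < N, f k) (pfx n S) := by
          intro x hx
          have hsub2 : (⋃ k < N, f k) ⊆ ⋃ i, f i := Set.iUnion₂_subset fun k _ => Set.subset_iUnion f k
          simp only [Set.symmDiff_def, Set.mem_union, Set.mem_diff, hs] at hx ⊢
          by_cases hxg : x ∈ ⋃ k < N, f k
          · tauto
          · rcases hx with ⟨hx1, hx2⟩ | ⟨hx1, hx2⟩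
            · exact Or.inl ⟨hx1, hxg⟩
            · exact Or.inr (Or.inr ⟨hx1, hxg⟩)
        calc μ (symmDiff (⋃ i, f i) (pfx n S))
            ≤ μ (s N ∪ symmDiff (⋃ k < N, f k) (pfx n S)) := measure_mono hsub
          _ ≤ μ (s N) + μ (symmDiff (⋃ k < N, f k) (pfx n S)) := measure_union_le _ _
          _ ≤ ε / 2 + ε / 2 := add_le_add hN.le hS
          _ = ε := ENNReal.add_halves ε }
    with h𝒢
  have hle : (seqMS I) ≤ 𝒢 := by
    show (⨆ m : ℕ, MeasurableSpace.comap (fun x : ℕ → I => x m) (⊤ : MeasurableSpace I)) ≤ 𝒢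
    refine iSup_le fun m => ?_
    rintro s ⟨t, -, rfl⟩
    have heq : (fun x : ℕ → I => x m) ⁻¹' t
        = pfx (m + 1) {u : Fin (m + 1) → I | u ⟨m, Nat.lt_succ_self m⟩ ∈ t} := by
      ext x; simp [pfx]
    refine ⟨eval_measurable m t, fun ε hε => ?_⟩
    exact ⟨m + 1, _, by rw [heq, symmDiff_self]; simp⟩
  exact (MeasurableSpace.le_def.1 hle A hA).2

end MeasureAux

end Aux

section Cocycle

variable {I : Type} [Countable I] {d : ℕ}

/-- ordered product of permutations along the first `n` coordinates -/
def wpr (a : I → Equiv.Perm (Fin d)) (n : ℕ) (x : ℕ → I) : Equiv.Perm (Fin d) :=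
  (List.ofFn fun j : Fin n => a (x (j : ℕ))).prod

/-- ordered product of permutations along a finite word -/
def upr (a : I → Equiv.Perm (Fin d)) {n : ℕ} (u : Fin n → I) : Equiv.Perm (Fin d) :=
  (List.ofFn fun j : Fin n => a (u j)).prod

lemma wpr_zero (a : I → Equiv.Perm (Fin d)) (x : ℕ → I) : wpr a 0 x = 1 := by
  simp [wpr]

lemma wpr_succ (a : I → Equiv.Perm (Fin d)) (n : ℕ) (x : ℕ → I) :
    wpr a (n + 1) x = wpr a n x * a (x n) := by
  rw [wpr, List.ofFn_succ', List.prod_concat, wpr]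
  congr 1

lemma wpr_eq_upr (a : I → Equiv.Perm (Fin d)) {n : ℕ} (u : Fin n → I) {x : ℕ → I}
    (hx : x ∈ cyl u) : wpr a n x = upr a u := by
  unfold wpr upr
  congr 1
  exact congrArg List.ofFn (funext fun j => congrArg a (hx j))

lemma iter_coc {W : (ℕ → I) → Equiv.Perm (Fin d)} {a₁ a₂ : I → Equiv.Perm (Fin d)} {x : ℕ → I}
    (hx : ∀ m, W (shift^[m] x) = a₂ (x m) * W (shift^[m + 1] x) * (a₁ (x m))⁻¹) :
    ∀ n, W x = wpr a₂ n x * W (shift^[n] x) * (wpr a₁ n x)⁻¹ := by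
  intro n
  induction n with
  | zero => simp [wpr_zero]
  | succ n ih =>
    rw [ih, hx n, wpr_succ, wpr_succ]
    group

theorem const_of_cocycle {ρ : I → ℝ≥0∞} {μ : Measure (ℕ → I)} (hμ : IsProductMeasure ρ μ)
    (a₁ a₂ : I → Equiv.Perm (Fin d)) (W : (ℕ → I) → Equiv.Perm (Fin d)) (hW : DMeasurable W)
    (hcoc : ∀ᵐ x ∂μ, (a₂ (x 0))⁻¹ * W x = W (shift x) * (a₁ (x 0))⁻¹) :
    ∃ w₀ : Equiv.Perm (Fin d), ∀ᵐ x ∂μ, W x = w₀ := by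
  haveI : IsProbabilityMeasure μ := hμ.1
  have base : ∀ᵐ x ∂μ, W x = a₂ (x 0) * W (shift x) * (a₁ (x 0))⁻¹ := by
    refine hcoc.mono fun x h => ?_
    rw [mul_assoc, ← h]
    group
  have hcoc' : ∀ᵐ x ∂μ, ∀ m, W (shift^[m] x) = a₂ (x m) * W (shift^[m + 1] x) * (a₁ (x m))⁻¹ := by
    rw [MeasureTheory.ae_all_iff]
    intro m
    refine (ae_shift_iter hμ base m).mono fun x h => ?_
    rw [Function.iterate_succ_apply']
    have h0 : shift^[m] x 0 = x m := by rw [shift_iter_apply m x 0, Nat.zero_add]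
    rwa [h0] at h
  have hiter : ∀ᵐ x ∂μ, ∀ n, W x = wpr a₂ n x * W (shift^[n] x) * (wpr a₁ n x)⁻¹ :=
    hcoc'.mono fun x hx => iter_coc hx
  set ν : Equiv.Perm (Fin d) → ℝ≥0∞ := fun g => μ (W ⁻¹' {g}) with hν
  obtain ⟨g₀, -, hmax'⟩ := Finset.exists_max_image (Finset.univ : Finset (Equiv.Perm (Fin d))) ν
    ⟨1, Finset.mem_univ 1⟩
  have hmax : ∀ g, ν g ≤ ν g₀ := fun g => hmax' g (Finset.mem_univ g)
  have hsum : ∑ g : Equiv.Perm (Fin d), ν g = 1 := by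
    have hpart : (Set.univ : Set (ℕ → I)) = ⋃ g ∈ (Finset.univ : Finset (Equiv.Perm (Fin d))),
        W ⁻¹' {g} := by
      ext x
      simp only [Set.mem_univ, true_iff, Set.mem_iUnion, Set.mem_preimage,
        Set.mem_singleton_iff]
      exact ⟨W x, Finset.mem_univ _, rfl⟩
    have hdisj : Set.PairwiseDisjoint
        (↑(Finset.univ : Finset (Equiv.Perm (Fin d)))) (fun g => W ⁻¹' {g}) := by
      intro g _ h _ hgh
      rw [Function.onFun, Set.disjoint_left]
      intro x hx hx'
      exact hgh ((Set.mem_singleton_iff.1 hx).symm.trans (Set.mem_singleton_iff.1 hx'))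
    rw [← measure_biUnion_finset hdisj fun g _ => hW g, ← hpart, measure_univ]
  have hM0 : ν g₀ ≠ 0 := by
    intro h0
    have : ∑ g : Equiv.Perm (Fin d), ν g = 0 :=
      Finset.sum_eq_zero fun g _ => le_antisymm (h0 ▸ hmax g) (by positivity)
    rw [hsum] at this
    exact one_ne_zero this
  have hM1 : ν g₀ ≤ 1 := prob_le_one
  set A : Set (ℕ → I) := W ⁻¹' {g₀} with hA
  have stepA : ∀ (n : ℕ) (u : Fin n → I), μ (A ∩ cyl u) ≤ ν g₀ * μ (cyl u) := by
    intro n u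
    set h_u : Equiv.Perm (Fin d) := (upr a₂ u)⁻¹ * g₀ * upr a₁ u with hhu
    have hae : ∀ᵐ x ∂μ, (x ∈ A ∩ cyl u ↔ x ∈ cyl u ∩ (shift^[n]) ⁻¹' (W ⁻¹' {h_u})) := by
      refine hiter.mono fun x hx => ?_
      have h1 := hx n
      constructor
      · rintro ⟨hxA, hxu⟩
        have hxA' : W x = g₀ := hxA
        rw [wpr_eq_upr a₂ u hxu, wpr_eq_upr a₁ u hxu] at h1
        refine ⟨hxu, ?_⟩
        simp only [Set.mem_preimage, Set.mem_singleton_iff, hhu]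
        rw [← hxA', h1]
        group
      · rintro ⟨hxu, hxs⟩
        have hxs' : W (shift^[n] x) = h_u := hxs
        rw [wpr_eq_upr a₂ u hxu, wpr_eq_upr a₁ u hxu] at h1
        refine ⟨?_, hxu⟩
        simp only [hA, Set.mem_preimage, Set.mem_singleton_iff]
        rw [h1, hxs', hhu]
        group
    have hμeq := measure_congr (Filter.eventuallyEq_set.2 hae)
    rw [hμeq, indep_cyl_shift hμ u (hW h_u)]
    rw [mul_comm]
    exact mul_le_mul_left (hmax h_u) _
  have stepB : ∀ (n : ℕ) (S : Set (Fin n → I)), μ (A ∩ pfx n S) ≤ ν g₀ * μ (pfx n S) := by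
    intro n S
    have hAB : A ∩ pfx n S = ⋃ u ∈ S, (A ∩ cyl u) := by
      rw [pfx_eq_iUnion, Set.inter_iUnion₂]
    rw [hAB, measure_biUnion S.to_countable
      (fun u _ v _ huv => (cyl_disjoint huv).mono Set.inter_subset_right Set.inter_subset_right)
      (fun u _ => (hW g₀).inter (cyl_measurable u))]
    calc ∑' u : S, μ (A ∩ cyl u.1) ≤ ∑' u : S, ν g₀ * μ (cyl u.1) :=
        ENNReal.tsum_le_tsum fun u => stepA n u.1
      _ = ν g₀ * ∑' u : S, μ (cyl u.1) := ENNReal.tsum_mul_left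
      _ = ν g₀ * μ (pfx n S) := congrArg (ν g₀ * ·) (measure_pfx hμ n S).symm
  have key : ∀ ε : ℝ≥0∞, 0 < ε → ν g₀ ≤ ν g₀ * ν g₀ + ε + ε := by
    intro ε hε
    obtain ⟨n, S, hS⟩ := approx_pfx hμ A (hW g₀) ε hε
    set B := pfx n S with hB
    have h2 : μ (A \ B) ≤ ε := by
      refine le_trans (measure_mono ?_) hS
      rw [Set.symmDiff_def]
      exact Set.subset_union_left
    have h3 : μ B ≤ ν g₀ + ε := by
      calc μ B ≤ μ (B ∩ A) + μ (B \ A) := measure_le_inter_add_diff μ B A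
        _ ≤ ν g₀ + ε := by
            refine add_le_add (measure_mono Set.inter_subset_right) ?_
            refine le_trans (measure_mono ?_) hS
            rw [Set.symmDiff_def]
            exact Set.subset_union_right
    calc ν g₀ = μ A := rfl
      _ ≤ μ (A ∩ B) + μ (A \ B) := measure_le_inter_add_diff μ A B
      _ ≤ ν g₀ * μ B + ε := add_le_add (stepB n S) h2
      _ ≤ ν g₀ * (ν g₀ + ε) + ε := add_le_add_left (mul_le_mul_right h3 _) ε
      _ = ν g₀ * ν g₀ + ν g₀ * ε + ε := by rw [mul_add]
      _ ≤ ν g₀ * ν g₀ + 1 * ε + ε :=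
          add_le_add_left (add_le_add_right (mul_le_mul_left hM1 ε) _) ε
      _ = ν g₀ * ν g₀ + ε + ε := by rw [one_mul]
  have hle : ν g₀ ≤ ν g₀ * ν g₀ := by
    refine ENNReal.le_of_forall_pos_le_add fun ε' hε' _ => ?_
    have h := key ((ε' : ℝ≥0∞) / 2) (ENNReal.half_pos (ENNReal.coe_ne_zero.2 hε'.ne'))
    rwa [add_assoc, ENNReal.add_halves] at h
  have hMtop : ν g₀ ≠ ⊤ := (lt_of_le_of_lt hM1 ENNReal.one_lt_top).ne
  have heq : ν g₀ * ν g₀ = ν g₀ :=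
    le_antisymm (by calc ν g₀ * ν g₀ ≤ ν g₀ * 1 := mul_le_mul_right hM1 _
                      _ = ν g₀ := mul_one _) hle
  have hone : ν g₀ = 1 := by
    have h := congrArg (fun t => (ν g₀)⁻¹ * t) heq
    simp only [← mul_assoc, ENNReal.inv_mul_cancel hM0 hMtop, one_mul] at h
    exact h
  refine ⟨g₀, ?_⟩
  rw [ae_iff]
  have hcompl : {x | ¬ W x = g₀} = Aᶜ := by ext x; simp [hA]
  rw [hcompl, measure_compl (hW g₀) (measure_ne_top μ _), measure_univ]
  show (1 : ℝ≥0∞) - ν g₀ = 0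
  rw [hone, tsub_self]

lemma conj_inv_rel {G : Type*} [Group G] {a b w : G} (h : a * w = w * b) :
    a⁻¹ * w = w * b⁻¹ := by
  calc a⁻¹ * w = a⁻¹ * (w * b) * b⁻¹ := by group
    _ = a⁻¹ * (a * w) * b⁻¹ := by rw [h]
    _ = w * b⁻¹ := by group

end Cocycle


/-- For the one-sided Bernoulli shift `T_ρ` on `X_ρ = I^ℕ` and two
functions `a₁ a₂ : I → 𝒜_d`, any measurable solution `W` of the cocycle equation
`A₂(x)·W(x) = W(T_ρ x)·A₁(x)` (where `A_k x = (a_k x₁)⁻¹`) is a.e. constant;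
consequently `A₁, A₂` are cohomologous with respect to `T_ρ` iff `a₁, a₂` are
conjugate in `𝒜_d`. -/
theorem stmt0 {I : Type} [Countable I] [Nontrivial I]
    (ρ : I → ℝ≥0∞) (hρ : IsProbVector ρ)
    (μ : Measure (ℕ → I)) (hμ : IsProductMeasure ρ μ)
    (d : ℕ) (a₁ a₂ : I → Equiv.Perm (Fin d)) :
    (∀ W : (ℕ → I) → Equiv.Perm (Fin d), DMeasurable W →
      (∀ᵐ x ∂μ, (a₂ (x 0))⁻¹ * W x = W (shift x) * (a₁ (x 0))⁻¹) →
      ∃ w₀ : Equiv.Perm (Fin d), ∀ᵐ x ∂μ, W x = w₀) ∧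
    ((∃ W : (ℕ → I) → Equiv.Perm (Fin d), DMeasurable W ∧
        ∀ᵐ x ∂μ, (a₂ (x 0))⁻¹ * W x = W (shift x) * (a₁ (x 0))⁻¹) ↔
      ∃ w₀ : Equiv.Perm (Fin d), ∀ i, a₂ i * w₀ = w₀ * a₁ i) := by
  haveI : IsProbabilityMeasure μ := hμ.1
  have hconst : ∀ W : (ℕ → I) → Equiv.Perm (Fin d), DMeasurable W →
      (∀ᵐ x ∂μ, (a₂ (x 0))⁻¹ * W x = W (shift x) * (a₁ (x 0))⁻¹) →
      ∃ w₀ : Equiv.Perm (Fin d), ∀ᵐ x ∂μ, W x = w₀ :=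
    fun W hW hcoc => const_of_cocycle hμ a₁ a₂ W hW hcoc
  refine ⟨hconst, ?_, ?_⟩
  · rintro ⟨W, hW, hcoc⟩
    obtain ⟨w₀, hae⟩ := hconst W hW hcoc
    refine ⟨w₀, fun i => ?_⟩
    have haes : ∀ᵐ x ∂μ, W (shift x) = w₀ := by
      have h := ae_shift_iter hμ hae 1
      simpa using h
    have hall : ∀ᵐ x ∂μ, (a₂ (x 0))⁻¹ * w₀ = w₀ * (a₁ (x 0))⁻¹ := by
      filter_upwards [hcoc, hae, haes] with x h1 h2 h3
      rw [h2, h3] at h1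
      exact h1
    have hcyl : μ (cyl (fun _ : Fin 1 => i)) = ρ i := by
      rw [hμ.2]
      simp
    have hpos : μ (cyl (fun _ : Fin 1 => i)) ≠ 0 := by
      rw [hcyl]
      exact (hρ.1 i).ne'
    rw [ae_iff] at hall
    have hns : ¬ (cyl (fun _ : Fin 1 => i)
        ⊆ {x | ¬ ((a₂ (x 0))⁻¹ * w₀ = w₀ * (a₁ (x 0))⁻¹)}) := by
      intro hsub
      exact hpos (measure_mono_null hsub hall)
    rw [Set.not_subset] at hns
    obtain ⟨x, hx1, hx2⟩ := hns
    have hx0 : x 0 = i := hx1 0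
    rw [Set.mem_setOf_eq, not_not, hx0] at hx2
    have h := conj_inv_rel hx2
    simpa using h
  · rintro ⟨w₀, hw⟩
    refine ⟨fun _ => w₀, fun g => ?_, ?_⟩
    · classical
      rw [Set.preimage_const]
      split
      · exact MeasurableSet.univ
      · exact MeasurableSet.empty
    · refine Filter.Eventually.of_forall fun x => ?_
      exact conj_inv_rel (hw (x 0))

end OneSidedMarkov
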